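/- Let IP be ergodic, shift-invariant, finite range M, satisfying the weak ellipticity condition, with P_0(lim X_n·ℓ = ∞) = 1. Suppose IP_∞ is a probability measure invariant for the environment process (T^{X_n}ω), whose restriction to the sigma-field S_k generated by {ω_x : x·ℓ ≥ k} is absolutely continuous with respect to IP restricted to S_k, for every k ≤ 0. Then for every k ≤ 0, IP_∞ and IP are mutually absolutely continuous on S_k. -/

import Mathlib

open MeasureTheory Filter Set
open scoped ENNReal

noncomputable section

abbrev Zd (d : ℕ) := Fin d → ℤ
abbrev Env (d : ℕ) := Zd d → Zd d → ℝ
abbrev Traj (d : ℕ) := ℕ → Zd d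

/-- shift of the environment by `k`: `(T^k ω) x e = ω (k+x) e`. -/
def shiftE {d : ℕ} (k : Zd d) (ω : Env d) : Env d := fun x e => ω (k + x) e

/-- the sup-norm ball of radius `M` in `ℤ^d`, the set of admissible jumps. -/
def box (d M : ℕ) : Finset (Zd d) := Finset.Icc (fun _ => -(M : ℤ)) (fun _ => (M : ℤ))

/-- scalar product `x · ℓ`. -/
def dotl {d : ℕ} (x : Zd d) (ℓ : Fin d → ℝ) : ℝ := ∑ i, (x i : ℝ) * ℓ i

/-- the local drift in direction `ℓ`: `D(ω)·ℓ`. -/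
def driftl {d : ℕ} (M : ℕ) (ℓ : Fin d → ℝ) (ω : Env d) : ℝ :=
  ∑ e ∈ box d M, dotl e ℓ * ω 0 e

/-- `μ` is the law of the quenched walk in environment `ω` started at `x0`:
a probability measure with `X_0 = x0` a.s., and the Markov property with
transition probabilities `ω i (j - i)` from `i` to `j`. -/
def IsWalk {d : ℕ} (μ : Measure (Traj d)) (ω : Env d) (x0 : Zd d) : Prop :=
  IsProbabilityMeasure μ ∧ μ {w | w 0 = x0} = 1 ∧
  ∀ (n : ℕ) (A : Set (Traj d)), MeasurableSet A →
    (∀ w w' : Traj d, (∀ m ≤ n, w m = w' m) → (w ∈ A ↔ w' ∈ A)) →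
    ∀ i j : Zd d,
      μ (A ∩ {w | w n = i ∧ w (n + 1) = j}) =
        ENNReal.ofReal (ω i (j - i)) * μ (A ∩ {w | w n = i})

/-- a nice environment of range `M`: nonnegative transition probabilities of
total mass one, supported on jumps of sup-norm at most `M`. -/
def GoodEnv {d : ℕ} (M : ℕ) (ω : Env d) : Prop :=
  (∀ x e, 0 ≤ ω x e) ∧ (∀ x, ∑ e ∈ box d M, ω x e = 1) ∧
  (∀ x e, e ∉ box d M → ω x e = 0)

/-- `U` is `M`-connected: there is a path of range `M` through all its points. -/
def MConn {d : ℕ} (M : ℕ) (U : Finset (Zd d)) : Prop :=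
  ∃ (n : ℕ) (p : ℕ → Zd d), (∀ i ≤ n, p i ∈ U) ∧
    (∀ i < n, p (i + 1) - p i ∈ box d M) ∧ (∀ x ∈ U, ∃ i ≤ n, p i = x)

/-- `E^ω_{x0}[Σ_{j=0}^{T_U} 1(X_j = x)]`, the expected number of visits to `x`
before exiting `U`. -/
def exitGreen {d : ℕ} (μ : Measure (Traj d)) (U : Set (Zd d)) (x : Zd d) : ℝ≥0∞ :=
  ∑' j : ℕ, μ {w | w j = x ∧ ∀ m < j, w m ∈ U}

/-- Kalikow's condition in direction `ℓ` with constant `ε`, for the annealed walk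
with environment distribution `IP` and quenched laws `P ω` (started at `0`). -/
def KalikowCond {d : ℕ} (IP : Measure (Env d)) (P : Env d → Measure (Traj d))
    (M : ℕ) (ℓ : Fin d → ℝ) (ε : ℝ) : Prop :=
  0 < ε ∧ ∀ U : Finset (Zd d), (0 : Zd d) ∈ U → MConn M U → ∀ x ∈ U,
    ε * ∫ ω, (exitGreen (P ω) (↑U) x).toReal ∂IP ≤
      ∫ ω, driftl M ℓ (shiftE x ω) * (exitGreen (P ω) (↑U) x).toReal ∂IP

/-- shift invariance of the environment measure. -/
def ShiftInv {d : ℕ} (IP : Measure (Env d)) : Prop :=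
  ∀ k : Zd d, Measure.map (shiftE k) IP = IP

/-- ergodicity of the environment measure under the shifts. -/
def ErgEnv {d : ℕ} (IP : Measure (Env d)) : Prop :=
  ShiftInv IP ∧ ∀ S : Set (Env d), MeasurableSet S →
    (∀ k : Zd d, shiftE k ⁻¹' S = S) → IP S = 0 ∨ IP S = 1

/-- invariance of a measure for the environment process viewed from the particle,
whose kernel is `π(ω, A) = Σ_{|e| ≤ M} π_{0e}(ω) 1_A(T^e ω)`. -/
def EnvInvariant {d : ℕ} (M : ℕ) (IPinf : Measure (Env d)) : Prop :=
  ∀ A : Set (Env d), MeasurableSet A →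
    ∫⁻ ω, ∑ e ∈ box d M, ENNReal.ofReal (ω 0 e) * A.indicator 1 (shiftE e ω) ∂IPinf
      = IPinf A

/-- weak ellipticity in direction `ℓ`: a.s. `π_{0j} > 0` for all unit vectors `j`
with `j·ℓ ≥ 0`. -/
def WeakElliptic {d : ℕ} (IP : Measure (Env d)) (ℓ : Fin d → ℝ) : Prop :=
  ∀ᵐ ω ∂IP, ∀ e : Zd d, (∑ i, (e i) * (e i)) = 1 → 0 ≤ dotl e ℓ → 0 < ω 0 e

/-- the half-space σ-field `S_k = σ(ω_x : x·ℓ ≥ k)`. -/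
def Sfield {d : ℕ} (ℓ : Fin d → ℝ) (k : ℝ) : MeasurableSpace (Env d) :=
  ⨆ x ∈ {x : Zd d | k ≤ dotl x ℓ}, MeasurableSpace.comap (fun ω : Env d => ω x) inferInstance

section AuxiliaryLemmas

variable {d : ℕ}

lemma dotl_add' (ℓ : Fin d → ℝ) (a b : Zd d) : dotl (a + b) ℓ = dotl a ℓ + dotl b ℓ := by
  simp [dotl, add_mul, Finset.sum_add_distrib]

lemma dotl_zero' (ℓ : Fin d → ℝ) : dotl (0 : Zd d) ℓ = 0 := by simp [dotl]

lemma dotl_single' (ℓ : Fin d → ℝ) (i : Fin d) (c : ℤ) :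
    dotl (Pi.single i c) ℓ = (c : ℝ) * ℓ i := by
  rw [dotl, Finset.sum_eq_single i]
  · simp
  · intro j _ hj; simp [Pi.single_eq_of_ne hj]
  · intro h; exact absurd (Finset.mem_univ i) h

lemma sum_single_mul' (i : Fin d) (c : ℤ) :
    (∑ j, Pi.single i c j * Pi.single i c j) = c * c := by
  rw [Finset.sum_eq_single i]
  · simp
  · intro j _ hj; simp [Pi.single_eq_of_ne hj]
  · intro h; exact absurd (Finset.mem_univ i) h

lemma single_neg' (i : Fin d) (c : ℤ) : Pi.single i (-c) = -(Pi.single i c : Zd d) := by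
  funext j
  rcases eq_or_ne j i with h | h
  · subst h; simp
  · simp [Pi.single_eq_of_ne h]

lemma single_mem_box' (M : ℕ) (hM : 1 ≤ M) (i : Fin d) (c : ℤ) (hc : c = 1 ∨ c = -1) :
    (Pi.single i c : Zd d) ∈ box d M := by
  have hM' : (1 : ℤ) ≤ (M : ℤ) := by exact_mod_cast hM
  rw [box, Finset.mem_Icc]
  have hbnd : ∀ j, -(M : ℤ) ≤ (Pi.single i c : Zd d) j ∧ (Pi.single i c : Zd d) j ≤ (M : ℤ) := by
    intro j
    rcases eq_or_ne j i with h | h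
    · subst h; rw [Pi.single_eq_same]; rcases hc with h | h <;> omega
    · rw [Pi.single_eq_of_ne h]; omega
  exact ⟨fun j => (hbnd j).1, fun j => (hbnd j).2⟩

lemma shiftE_shiftE' (a b : Zd d) (ω : Env d) : shiftE a (shiftE b ω) = shiftE (b + a) ω := by
  funext x e
  simp [shiftE, add_assoc]

lemma shiftE_zero' : shiftE (0 : Zd d) = id := by
  funext ω x e
  simp [shiftE]

lemma measurable_shiftE' (z : Zd d) : Measurable (shiftE (d := d) z) :=
  measurable_pi_lambda _ fun x => measurable_pi_apply (z + x)

lemma Sfield_le' (ℓ : Fin d → ℝ) (k : ℝ) :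
    Sfield ℓ k ≤ (inferInstance : MeasurableSpace (Env d)) :=
  iSup₂_le fun x _ => (measurable_pi_apply x).comap_le

lemma measurable_coord_Sfield' (ℓ : Fin d → ℝ) (k : ℝ) (x : Zd d) (hx : k ≤ dotl x ℓ) :
    Measurable[Sfield ℓ k] fun ω : Env d => ω x :=
  measurable_iff_comap_le.mpr
    (le_biSup (fun x : Zd d => MeasurableSpace.comap (fun ω : Env d => ω x) inferInstance) hx)

lemma measurable_shiftE_Sfield' (ℓ : Fin d → ℝ) (k : ℝ) (e : Zd d) (he : 0 ≤ dotl e ℓ) :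
    @Measurable (Env d) (Env d) (Sfield ℓ k) (Sfield ℓ k) (shiftE e) := by
  rw [measurable_iff_comap_le]
  have hcomap : MeasurableSpace.comap (shiftE e) (Sfield ℓ k) =
      ⨆ x ∈ {x : Zd d | k ≤ dotl x ℓ},
        MeasurableSpace.comap (fun ω : Env d => ω (e + x)) inferInstance := by
    rw [Sfield]
    simp_rw [MeasurableSpace.comap_iSup, MeasurableSpace.comap_comp]
    rfl
  rw [hcomap]
  refine iSup₂_le fun x hx => ?_
  have hx' : (e + x) ∈ {x : Zd d | k ≤ dotl x ℓ} := by
    have : k ≤ dotl x ℓ := hx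
    simp only [Set.mem_setOf_eq, dotl_add']
    linarith
  exact le_biSup (fun x : Zd d => MeasurableSpace.comap (fun ω : Env d => ω x) inferInstance) hx'

end AuxiliaryLemmas

/-- if `IP` is ergodic, shift invariant, finite range, weakly elliptic,
the walk is transient in direction `ℓ`, and `IP_∞` is an invariant probability
measure for the environment process which is absolutely continuous w.r.t. `IP` on
every half-space σ-field `S_k`, `k ≤ 0`, then `IP_∞` and `IP` are mutually
absolutely continuous on every `S_k`, `k ≤ 0`. -/
theorem mutual_ac_on_halfspaces {d M : ℕ} (ℓ : Fin d → ℝ)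
    (IP : Measure (Env d)) [IsProbabilityMeasure IP]
    (herg : ErgEnv IP) (hgood : ∀ᵐ ω ∂IP, GoodEnv M ω)
    (hell : WeakElliptic IP ℓ)
    (P : Env d → Measure (Traj d)) (hP : ∀ᵐ ω ∂IP, IsWalk (P ω) ω 0)
    (ann : Measure (Traj d))
    (hann : ∀ S : Set (Traj d), MeasurableSet S → ann S = ∫⁻ ω, P ω S ∂IP)
    (htrans : ann {w | Tendsto (fun n => dotl (w n) ℓ) atTop atTop} = 1)
    (IPinf : Measure (Env d)) [IsProbabilityMeasure IPinf]
    (hinv : EnvInvariant M IPinf)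
    (hac : ∀ k : ℝ, k ≤ 0 → ∀ A : Set (Env d),
      MeasurableSet[Sfield ℓ k] A → IP A = 0 → IPinf A = 0) :
    ∀ k : ℝ, k ≤ 0 → ∀ A : Set (Env d),
      MeasurableSet[Sfield ℓ k] A → (IP A = 0 ↔ IPinf A = 0) := by
  by_cases hd : d = 0
  · exfalso
    have hempty : {w : Traj d | Tendsto (fun n => dotl (w n) ℓ) atTop atTop} = ∅ := by
      ext w
      simp only [Set.mem_setOf_eq, Set.mem_empty_iff_false, iff_false]
      intro h
      have h0 : ∀ n, dotl (w n) ℓ = 0 := by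
        intro n
        rw [dotl]
        subst hd
        simp
      obtain ⟨n, hn⟩ := (h.eventually (eventually_gt_atTop (0 : ℝ))).exists
      rw [h0 n] at hn
      exact lt_irrefl _ hn
    rw [hempty, measure_empty] at htrans
    exact zero_ne_one htrans
  by_cases hM : M = 0
  · exfalso
    have hdpos : 0 < d := Nat.pos_of_ne_zero hd
    set i : Fin d := ⟨0, hdpos⟩
    set c : ℤ := if 0 ≤ ℓ i then 1 else -1 with hc
    set e : Zd d := Pi.single i c with he
    have hcc : c = 1 ∨ c = -1 := by rw [hc]; split_ifs <;> simp
    have hunit : (∑ j, e j * e j) = 1 := by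
      rw [he, sum_single_mul']
      rcases hcc with h | h <;> rw [h] <;> norm_num
    have hdot : 0 ≤ dotl e ℓ := by
      rw [he, dotl_single']
      rcases le_or_gt 0 (ℓ i) with h | h
      · rw [hc, if_pos h]; push_cast; linarith
      · rw [hc, if_neg (not_le.mpr h)]; push_cast; linarith
    have hnotbox : e ∉ box d M := by
      intro hmem
      subst hM
      rw [box, Finset.mem_Icc] at hmem
      have h1 := hmem.1 i
      have h2 := hmem.2 i
      rw [he, Pi.single_eq_same] at h1 h2
      simp only [Nat.cast_zero, neg_zero] at h1 h2
      rcases hcc with h | h <;> omega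
    have hne : IP ≠ 0 := IsProbabilityMeasure.ne_zero IP
    haveI : (MeasureTheory.ae IP).NeBot := ae_neBot.mpr hne
    have hbad : ∀ᵐ ω ∂IP, False := by
      filter_upwards [hgood, hell] with ω h1 h2
      have hz : ω 0 e = 0 := h1.2.2 0 e hnotbox
      have hp : 0 < ω 0 e := h2 e hunit hdot
      rw [hz] at hp
      exact lt_irrefl _ hp
    obtain ⟨ω, h⟩ := hbad.exists
    exact h
  -- main case
  have hM1 : 1 ≤ M := Nat.one_le_iff_ne_zero.mpr hM
  intro k hk A hA
  have hle : Sfield ℓ k ≤ (inferInstance : MeasurableSpace (Env d)) := Sfield_le' ℓ k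
  set mIP := IP.trim hle with hmIP
  set mInf := IPinf.trim hle with hmInf
  have hacm : mInf ≪ mIP := by
    refine Measure.AbsolutelyContinuous.mk fun s hs h0 => ?_
    rw [hmInf, trim_measurableSet_eq hle hs]
    rw [hmIP, trim_measurableSet_eq hle hs] at h0
    exact hac k hk s hs h0
  set f := Measure.rnDeriv mInf mIP with hfdef
  have hf : Measurable[Sfield ℓ k] f := Measure.measurable_rnDeriv _ _
  have hwd : mIP.withDensity f = mInf := Measure.withDensity_rnDeriv_eq _ _ hacm
  have hInt : ∀ s : Set (Env d), MeasurableSet[Sfield ℓ k] s →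
      IPinf s = ∫⁻ ω in s, f ω ∂mIP := by
    intro s hs
    rw [← trim_measurableSet_eq hle hs (μ := IPinf), ← hmInf, ← hwd,
      withDensity_apply _ hs]
  set Y : Set (Env d) := {ω | f ω ≠ 0} with hYdef
  have hYmS : MeasurableSet[Sfield ℓ k] Y := (hf (measurableSet_singleton 0)).compl
  have hYm : MeasurableSet Y := hle _ hYmS
  -- IPinf-null S_k sets do not charge Y under IP
  have hzero : ∀ s : Set (Env d), MeasurableSet[Sfield ℓ k] s → IPinf s = 0 →
      IP (Y ∩ s) = 0 := by
    intro s hs h0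
    have h1 : ∫⁻ ω in s, f ω ∂mIP = 0 := by rw [← hInt s hs]; exact h0
    have h2 : f =ᵐ[mIP.restrict s] 0 := (lintegral_eq_zero_iff hf).mp h1
    have h3 : mIP.restrict s Y = 0 := ae_iff.mp h2
    rw [Measure.restrict_apply hYmS] at h3
    rw [← trim_measurableSet_eq hle (hYmS.inter hs) (μ := IP)]
    exact h3
  have hNinf : IPinf Yᶜ = 0 := by
    rw [hInt _ hYmS.compl]
    have hz : ∀ᵐ ω ∂mIP, ω ∈ Yᶜ → f ω = 0 := by
      refine ae_of_all _ fun ω hω => ?_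
      simpa [hYdef] using hω
    calc ∫⁻ ω in Yᶜ, f ω ∂mIP = ∫⁻ ω in Yᶜ, 0 ∂mIP :=
          setLIntegral_congr_fun_ae hYmS.compl hz
      _ = 0 := by simp
  -- quasi measure preserving shifts
  have qmp : ∀ z : Zd d, Measure.QuasiMeasurePreserving (shiftE z) IP IP := by
    intro z
    refine ⟨measurable_shiftE' z, ?_⟩
    rw [herg.1 z]
  -- the key one-step invariance
  have hdir : ∀ e : Zd d, e ∈ box d M → (∑ j, e j * e j) = 1 → 0 ≤ dotl e ℓ →
      shiftE e ⁻¹' Y =ᵐ[IP] Y := by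
    intro e hmem hunit hdot
    set Ae : Set (Env d) := {ω | 0 < ω 0 e ∧ f (shiftE e ω) = 0} with hAedef
    have hAeS : MeasurableSet[Sfield ℓ k] Ae := by
      have m1 : Measurable[Sfield ℓ k] fun ω : Env d => ω 0 e :=
        (measurable_pi_apply e).comp
          (measurable_coord_Sfield' ℓ k 0 (by rw [dotl_zero']; exact hk))
      have m2 : Measurable[Sfield ℓ k] fun ω : Env d => f (shiftE e ω) :=
        hf.comp (measurable_shiftE_Sfield' ℓ k e hdot)
      have : Ae = {ω : Env d | 0 < ω 0 e} ∩ {ω : Env d | f (shiftE e ω) = 0} := by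
        ext ω; simp [hAedef, Set.mem_setOf_eq]
      rw [this]
      exact (m1 measurableSet_Ioi).inter (m2 (measurableSet_singleton 0))
    have hAe0 : IPinf Ae = 0 := by
      have hsum := hinv Yᶜ hYm.compl
      have hterm : ∫⁻ ω, ENNReal.ofReal (ω 0 e) * Yᶜ.indicator 1 (shiftE e ω) ∂IPinf = 0 := by
        have hle' : ∀ ω : Env d, ENNReal.ofReal (ω 0 e) * Yᶜ.indicator 1 (shiftE e ω) ≤
            ∑ e' ∈ box d M, ENNReal.ofReal (ω 0 e') * Yᶜ.indicator 1 (shiftE e' ω) := fun ω =>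
          Finset.single_le_sum (f := fun e' => ENNReal.ofReal (ω 0 e') *
            Yᶜ.indicator 1 (shiftE e' ω)) (fun _ _ => zero_le) hmem
        have hmono : ∫⁻ ω, ENNReal.ofReal (ω 0 e) * Yᶜ.indicator 1 (shiftE e ω) ∂IPinf ≤
            ∫⁻ ω, ∑ e' ∈ box d M, ENNReal.ofReal (ω 0 e') * Yᶜ.indicator 1 (shiftE e' ω) ∂IPinf :=
          lintegral_mono hle'
        rw [hsum, hNinf] at hmono
        exact le_antisymm hmono zero_le
      have hmeas : Measurable fun ω : Env d =>
          ENNReal.ofReal (ω 0 e) * Yᶜ.indicator 1 (shiftE e ω) := by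
        refine Measurable.mul ?_ ?_
        · exact ENNReal.measurable_ofReal.comp
            ((measurable_pi_apply e).comp (measurable_pi_apply 0))
        · exact (measurable_one.indicator hYm.compl).comp (measurable_shiftE' e)
      have hae := (lintegral_eq_zero_iff hmeas).mp hterm
      refine measure_mono_null ?_ (ae_iff.mp hae)
      rintro ω ⟨h1, h2⟩
      simp only [Set.mem_setOf_eq]
      have hind : Yᶜ.indicator (1 : Env d → ℝ≥0∞) (shiftE e ω) = 1 := by
        refine Set.indicator_of_mem ?_ 1
        simp [hYdef, h2]
      rw [hind, mul_one]
      exact (ENNReal.ofReal_pos.mpr h1).ne'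
    have hYAe : IP (Y ∩ Ae) = 0 := hzero Ae hAeS hAe0
    have hellN : IP {ω : Env d | ¬ 0 < ω 0 e} = 0 := by
      refine measure_mono_null ?_ (ae_iff.mp hell)
      intro ω hω h
      exact hω (h e hunit hdot)
    have hstep : IP (Y \ shiftE e ⁻¹' Y) = 0 := by
      refine measure_mono_null ?_ (measure_union_null hYAe hellN)
      rintro ω ⟨h1, h2⟩
      by_cases hpos : 0 < ω 0 e
      · left
        refine ⟨h1, hpos, ?_⟩
        have : ¬ f (shiftE e ω) ≠ 0 := h2
        exact not_not.mp this
      · right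
        exact hpos
    set Z : Set (Env d) := shiftE e ⁻¹' Y with hZdef
    have hZm : MeasurableSet Z := (measurable_shiftE' e) hYm
    have hmap : IP Z = IP Y := by
      conv_rhs => rw [← herg.1 e]
      rw [Measure.map_apply (measurable_shiftE' e) hYm]
    have eq1 : IP (Y ∩ Z) + IP (Y \ Z) = IP Y := measure_inter_add_diff Y hZm
    have eq2 : IP (Z ∩ Y) + IP (Z \ Y) = IP Z := measure_inter_add_diff Z hYm
    rw [hstep, add_zero] at eq1
    rw [Set.inter_comm, eq1, hmap] at eq2
    have hZY : IP (Z \ Y) = 0 := by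
      have hfin : IP Y ≠ ⊤ := measure_ne_top IP Y
      have : IP Y + IP (Z \ Y) = IP Y + 0 := by rw [eq2, add_zero]
      exact (ENNReal.add_right_inj hfin).mp this
    exact ae_eq_set.mpr ⟨hZY, hstep⟩
  -- generators in both directions
  have hgen : ∀ (i : Fin d) (c : ℤ), c = 1 ∨ c = -1 →
      shiftE (Pi.single i c) ⁻¹' Y =ᵐ[IP] Y := by
    intro i c hcc
    set ε : ℤ := if 0 ≤ ℓ i then 1 else -1 with hε
    have hεε : ε = 1 ∨ ε = -1 := by rw [hε]; split_ifs <;> simp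
    set g : Zd d := Pi.single i ε with hg
    have hg1 : shiftE g ⁻¹' Y =ᵐ[IP] Y := by
      refine hdir g (single_mem_box' M hM1 i ε hεε) ?_ ?_
      · rw [hg, sum_single_mul']
        rcases hεε with h | h <;> rw [h] <;> norm_num
      · rw [hg, dotl_single']
        rcases le_or_gt 0 (ℓ i) with h | h
        · rw [hε, if_pos h]; push_cast; linarith
        · rw [hε, if_neg (not_le.mpr h)]; push_cast; linarith
    have hg2 : shiftE (-g) ⁻¹' Y =ᵐ[IP] Y := by
      have h2 := (qmp (-g)).preimage_ae_eq hg1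
      have h3 : shiftE (-g) ⁻¹' (shiftE g ⁻¹' Y) = Y := by
        ext ω
        simp [Set.mem_preimage, shiftE_shiftE', shiftE_zero']
      rw [h3] at h2
      exact h2.symm
    have hsingle : Pi.single i c = g ∨ Pi.single i c = -g := by
      rcases hεε with h | h <;> rcases hcc with h' | h'
      · left; rw [hg, h, h']
      · right; rw [hg, h, h', ← single_neg']
      · right; rw [hg, h, h', ← single_neg']; norm_num
      · left; rw [hg, h, h']
    rcases hsingle with h | h <;> rw [h]
    · exact hg1
    · exact hg2
  -- all shifts preserve Y modulo IP-null sets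
  have hQ : ∀ z : Zd d, shiftE z ⁻¹' Y =ᵐ[IP] Y := by
    have key : ∀ n : ℕ, ∀ z : Zd d, (∑ j, (z j).natAbs) ≤ n → shiftE z ⁻¹' Y =ᵐ[IP] Y := by
      intro n
      induction n with
      | zero =>
        intro z hz
        have hz0 : z = 0 := by
          funext j
          have h1 : (z j).natAbs = 0 := by
            have h2 : (z j).natAbs ≤ ∑ j', (z j').natAbs := by
              refine Finset.single_le_sum (f := fun j' => (z j').natAbs) (fun _ _ => Nat.zero_le _)
                (Finset.mem_univ j)
            omega
          have : z j = 0 := Int.natAbs_eq_zero.mp h1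
          rw [this, Pi.zero_apply]
        rw [hz0, shiftE_zero', Set.preimage_id]
        exact EventuallyEq.rfl
      | succ n ih =>
        intro z hz
        by_cases h0 : ∑ j, (z j).natAbs ≤ n
        · exact ih z h0
        · have hex : ∃ i, z i ≠ 0 := by
            by_contra hall
            push_neg at hall
            simp only [hall, Int.natAbs_zero, Finset.sum_const_zero] at h0
            omega
          obtain ⟨i, hi⟩ := hex
          set c : ℤ := if 0 < z i then 1 else -1 with hc
          have hcc : c = 1 ∨ c = -1 := by rw [hc]; split_ifs <;> simp
          set z' : Zd d := z - Pi.single i c with hz'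
          have hdec : (∑ j, (z' j).natAbs) ≤ n := by
            have hsplit : ∀ w : Zd d, ∑ j, (w j).natAbs =
                (w i).natAbs + ∑ j ∈ Finset.univ.erase i, (w j).natAbs := fun w =>
              (Finset.add_sum_erase _ (fun j => (w j).natAbs) (Finset.mem_univ i)).symm
            have hsame : ∑ j ∈ Finset.univ.erase i, (z' j).natAbs =
                ∑ j ∈ Finset.univ.erase i, (z j).natAbs := by
              refine Finset.sum_congr rfl fun j hj => ?_
              have hji : j ≠ i := (Finset.mem_erase.mp hj).1
              have : z' j = z j := by
                rw [hz', Pi.sub_apply, Pi.single_eq_of_ne hji, sub_zero]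
              rw [this]
            have hzi : z' i = z i - c := by
              rw [hz', Pi.sub_apply, Pi.single_eq_same]
            have hlt : (z' i).natAbs < (z i).natAbs := by
              rw [hzi, hc]
              split_ifs with h
              · omega
              · have : z i < 0 := by omega
                omega
            have e1 := hsplit z
            have e2 := hsplit z'
            omega
          have hcomp : shiftE z ⁻¹' Y = shiftE (Pi.single i c) ⁻¹' (shiftE z' ⁻¹' Y) := by
            ext ω
            simp only [Set.mem_preimage]
            have hidx : Pi.single i c + z' = z := by rw [hz']; abel
            rw [shiftE_shiftE', hidx]
          rw [hcomp]
          exact ((qmp (Pi.single i c)).preimage_ae_eq (ih z' hdec)).trans (hgen i c hcc)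
    intro z
    exact key (∑ j, (z j).natAbs) z le_rfl
  -- the saturated set
  set Y₁ : Set (Env d) := ⋃ z : Zd d, shiftE z ⁻¹' Y with hY₁def
  have hY₁m : MeasurableSet Y₁ := MeasurableSet.iUnion fun z => (measurable_shiftE' z) hYm
  have hY₁inv : ∀ j : Zd d, shiftE j ⁻¹' Y₁ = Y₁ := by
    intro j
    ext ω
    simp only [hY₁def, Set.mem_preimage, Set.mem_iUnion]
    constructor
    · rintro ⟨z, hz⟩
      refine ⟨j + z, ?_⟩
      rwa [← shiftE_shiftE']
    · rintro ⟨z, hz⟩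
      refine ⟨z - j, ?_⟩
      rw [shiftE_shiftE']
      have : j + (z - j) = z := by abel
      rwa [this]
  have hY₁ae : Y₁ =ᵐ[IP] Y := by
    have h1 : Y₁ =ᵐ[IP] ⋃ _ : Zd d, Y := EventuallyEq.countable_iUnion fun z => hQ z
    have h2 : (⋃ _ : Zd d, Y) = Y := Set.iUnion_const Y
    rw [h2] at h1
    exact h1
  rcases herg.2 Y₁ hY₁m hY₁inv with h0 | h1
  · exfalso
    have hIPY : IP Y = 0 := by rw [← measure_congr hY₁ae]; exact h0
    have hmY : mIP Y = 0 := by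
      rw [hmIP, trim_measurableSet_eq hle hYmS]
      exact hIPY
    have hone : (1 : ℝ≥0∞) = ∫⁻ ω, f ω ∂mIP := by
      have := hInt Set.univ MeasurableSet.univ
      rwa [measure_univ, Measure.restrict_univ] at this
    have hzero' : ∫⁻ ω, f ω ∂mIP = 0 := by
      rw [lintegral_eq_zero_iff hf]
      exact ae_iff.mpr hmY
    rw [hzero'] at hone
    exact one_ne_zero hone
  · have hIPY : IP Y = 1 := by rw [← measure_congr hY₁ae]; exact h1
    have hNc : IP Yᶜ = 0 := by
      rw [measure_compl hYm (measure_ne_top _ _), hIPY, measure_univ, tsub_self]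
    constructor
    · intro h
      exact hac k hk A hA h
    · intro h
      have h1 : IP (Y ∩ A) = 0 := hzero A hA h
      have h2 : IP (Yᶜ ∩ A) = 0 :=
        measure_mono_null Set.inter_subset_left hNc
      have hsub : A ⊆ (Y ∩ A) ∪ (Yᶜ ∩ A) := by
        intro ω hω
        by_cases hY : ω ∈ Y
        · exact Or.inl ⟨hY, hω⟩
        · exact Or.inr ⟨hY, hω⟩
      exact measure_mono_null hsub (measure_union_null h1 h2)
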